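/- Let A be an n-by-n nonsingular Hermitian matrix with eigenpair (λ, x) where λ is an eigenvalue of smallest absolute value among all eigenvalues of A (λ = λ_min). Then for every nonzero vector y in ℂ^n, sin∠(x, y) ≤ sin∠(x, Ay); that is, the approximation quality of y with respect to x does not improve after multiplication with A. -/

import Mathlib

open Matrix
open scoped ComplexOrder

noncomputable def hnorm {n : ℕ} (x : Fin n → ℂ) : ℝ :=
  Real.sqrt ((star x ⬝ᵥ x).re)

noncomputable def cosAngle {n : ℕ} (x y : Fin n → ℂ) : ℝ :=
  ‖star x ⬝ᵥ y‖ / (hnorm x * hnorm y)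

noncomputable def sinAngle {n : ℕ} (x y : Fin n → ℂ) : ℝ :=
  Real.sqrt (1 - cosAngle x y ^ 2)

noncomputable def sinAngleSub {n : ℕ} (x : Fin n → ℂ) (K : Submodule ℂ (Fin n → ℂ)) : ℝ :=
  sInf {s : ℝ | ∃ y ∈ K, y ≠ 0 ∧ s = sinAngle x y}

noncomputable def sinAngleSubSub {n : ℕ} (X K : Submodule ℂ (Fin n → ℂ)) : ℝ :=
  sInf {s : ℝ | ∃ x ∈ X, x ≠ 0 ∧ ∃ y ∈ K, y ≠ 0 ∧ s = sinAngle x y}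

def Eigenpair {n : ℕ} (A : Matrix (Fin n) (Fin n) ℂ) (μ : ℂ) (v : Fin n → ℂ) : Prop :=
  v ≠ 0 ∧ A *ᵥ v = μ • v

noncomputable def specNorm {n : ℕ} (M : Matrix (Fin n) (Fin n) ℂ) : ℝ :=
  sSup {r : ℝ | ∃ v : Fin n → ℂ, hnorm v = 1 ∧ r = hnorm (M *ᵥ v)}

noncomputable def frobNorm {m p : ℕ} (M : Matrix (Fin m) (Fin p) ℂ) : ℝ :=
  Real.sqrt (∑ i, ∑ j, ‖M i j‖ ^ 2)

noncomputable def specCond {n : ℕ} (M : Matrix (Fin n) (Fin n) ℂ) : ℝ :=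
  sSup {r : ℝ | ∃ μ ∈ spectrum ℂ M, r = ‖μ‖} /
    sInf {r : ℝ | ∃ μ ∈ spectrum ℂ M, r = ‖μ‖}

def RitzPair {n : ℕ} (A : Matrix (Fin n) (Fin n) ℂ) (K : Submodule ℂ (Fin n → ℂ))
    (μ : ℂ) (u : Fin n → ℂ) : Prop :=
  u ∈ K ∧ u ≠ 0 ∧ ∀ y ∈ K, star y ⬝ᵥ (A *ᵥ u - μ • u) = 0

def HarmonicRitzPair {n : ℕ} (A : Matrix (Fin n) (Fin n) ℂ) (σ : ℂ)
    (K : Submodule ℂ (Fin n → ℂ)) (θ : ℂ) (v : Fin n → ℂ) : Prop :=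
  v ∈ K ∧ v ≠ 0 ∧ ∀ y ∈ K, star ((A - σ • 1) *ᵥ y) ⬝ᵥ (A *ᵥ v - θ • v) = 0

def THarmonicRitzPair {n : ℕ} (A T : Matrix (Fin n) (Fin n) ℂ) (σ : ℂ)
    (K : Submodule ℂ (Fin n → ℂ)) (θ : ℂ) (v : Fin n → ℂ) : Prop :=
  v ∈ K ∧ v ≠ 0 ∧ ∀ y ∈ K, star ((A - σ • 1) *ᵥ y) ⬝ᵥ (T *ᵥ (A *ᵥ v - θ • v)) = 0

def IsOrthProjOn {n : ℕ} (P : Matrix (Fin n) (Fin n) ℂ)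
    (Q : Submodule ℂ (Fin n → ℂ)) : Prop :=
  P.IsHermitian ∧ P * P = P ∧ (∀ v, P *ᵥ v ∈ Q) ∧ (∀ v ∈ Q, P *ᵥ v = v)


private lemma dot_self_re {n : ℕ} (v : Fin n → ℂ) :
    (star v ⬝ᵥ v).re = ∑ i, Complex.normSq (v i) := by
  simp only [dotProduct, Pi.star_apply, Complex.re_sum]
  congr 1; ext i
  rw [Complex.star_def, ← Complex.normSq_eq_conj_mul_self, Complex.ofReal_re]

private lemma hnorm_pos {n : ℕ} {v : Fin n → ℂ} (hv : v ≠ 0) : 0 < hnorm v := by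
  apply Real.sqrt_pos.2
  rw [dot_self_re]
  obtain ⟨i, hi⟩ := Function.ne_iff.1 hv
  exact Finset.sum_pos' (fun j _ => Complex.normSq_nonneg _)
    ⟨i, Finset.mem_univ i, Complex.normSq_pos.2 hi⟩

private lemma unit_dot {n : ℕ} (U : Matrix (Fin n) (Fin n) ℂ) (hU : Uᴴ * U = 1) (v : Fin n → ℂ) :
    star (U *ᵥ v) ⬝ᵥ (U *ᵥ v) = star v ⬝ᵥ v := by
  rw [Matrix.star_mulVec, Matrix.dotProduct_mulVec, Matrix.vecMul_vecMul, hU, Matrix.vecMul_one]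

private lemma key_norm_ineq {n : ℕ} (A : Matrix (Fin n) (Fin n) ℂ) (hA : A.IsHermitian)
    (l : ℂ) (hmin : ∀ μ v, Eigenpair A μ v → ‖l‖ ≤ ‖μ‖)
    (y : Fin n → ℂ) :
    ‖l‖ * hnorm y ≤ hnorm (A *ᵥ y) := by
  classical
  set U : Matrix (Fin n) (Fin n) ℂ := (hA.eigenvectorUnitary : Matrix (Fin n) (Fin n) ℂ) with hUdef
  have hU1 : Uᴴ * U = 1 := Matrix.UnitaryGroup.star_mul_self hA.eigenvectorUnitary
  have hU2 : U * Uᴴ = 1 := by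
    rw [mul_eq_one_comm] at hU1; exact hU1
  set z : Fin n → ℂ := Uᴴ *ᵥ y with hzdef
  have hyz : star y ⬝ᵥ y = star z ⬝ᵥ z := by
    have := unit_dot Uᴴ (by rw [Matrix.conjTranspose_conjTranspose]; exact hU2) y
    rw [this]
  set D : Matrix (Fin n) (Fin n) ℂ := Matrix.diagonal (Complex.ofReal ∘ hA.eigenvalues) with hDdef
  have hAy : A *ᵥ y = U *ᵥ (D *ᵥ z) := by
    conv_lhs => rw [hA.spectral_theorem]
    rw [Unitary.conjStarAlgAut_apply, ← Matrix.mulVec_mulVec, ← Matrix.mulVec_mulVec]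
    rfl
  have hdz : (star (A *ᵥ y) ⬝ᵥ (A *ᵥ y)) = star (D *ᵥ z) ⬝ᵥ (D *ᵥ z) := by
    rw [hAy, unit_dot U hU1]
  have hev : ∀ i, ‖l‖ ^ 2 ≤ hA.eigenvalues i ^ 2 := by
    intro i
    have h1 : ‖l‖ ≤ ‖(hA.eigenvalues i : ℂ)‖ := by
      apply hmin _ ⇑(hA.eigenvectorBasis i)
      refine ⟨by simpa using hA.eigenvectorBasis.orthonormal.ne_zero i, ?_⟩
      have := hA.mulVec_eigenvectorBasis i
      simpa using this
    have h2 : ‖(hA.eigenvalues i : ℂ)‖ = |hA.eigenvalues i| := by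
      simp
    rw [h2] at h1
    calc ‖l‖ ^ 2 ≤ |hA.eigenvalues i| ^ 2 :=
          pow_le_pow_left₀ (norm_nonneg l) h1 2
      _ = hA.eigenvalues i ^ 2 := sq_abs _
  have hre : ‖l‖ ^ 2 * (star y ⬝ᵥ y).re ≤ (star (A *ᵥ y) ⬝ᵥ (A *ᵥ y)).re := by
    rw [hdz, hyz, dot_self_re, dot_self_re, Finset.mul_sum]
    apply Finset.sum_le_sum
    intro i _
    have hDz : (D *ᵥ z) i = (hA.eigenvalues i : ℂ) * z i := by
      rw [hDdef, Matrix.mulVec_diagonal]; rfl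
    rw [hDz, Complex.normSq_mul, Complex.normSq_ofReal]
    calc ‖l‖ ^ 2 * Complex.normSq (z i)
        ≤ hA.eigenvalues i ^ 2 * Complex.normSq (z i) :=
          mul_le_mul_of_nonneg_right (hev i) (Complex.normSq_nonneg _)
      _ = hA.eigenvalues i * hA.eigenvalues i * Complex.normSq (z i) := by ring
  unfold hnorm
  rw [← Real.sqrt_sq (norm_nonneg l), ← Real.sqrt_mul (sq_nonneg _)]
  exact Real.sqrt_le_sqrt hre

/-- for the smallest-magnitude eigenvalue, multiplication by A does not
improve the angle: sin∠(x, y) ≤ sin∠(x, Ay). -/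
theorem stmt13_multiplication_does_not_improve
    {n : ℕ} (A : Matrix (Fin n) (Fin n) ℂ) (hA : A.IsHermitian) (hdet : IsUnit A.det)
    (l : ℂ) (x : Fin n → ℂ) (hx : Eigenpair A l x)
    (hmin : ∀ μ v, Eigenpair A μ v → ‖l‖ ≤ ‖μ‖)
    (y : Fin n → ℂ) (hy : y ≠ 0) :
    sinAngle x y ≤ sinAngle x (A *ᵥ y) := by
  obtain ⟨hx0, hxe⟩ := hx
  have hAy0 : A *ᵥ y ≠ 0 := by
    intro h
    apply hy
    have h2 := congrArg (fun v => A⁻¹ *ᵥ v) h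
    simpa [Matrix.mulVec_mulVec, Matrix.nonsing_inv_mul A hdet] using h2
  have hxp : 0 < hnorm x := hnorm_pos hx0
  have hyp : 0 < hnorm y := hnorm_pos hy
  have hAyp : 0 < hnorm (A *ᵥ y) := hnorm_pos hAy0
  have key := key_norm_ineq A hA l hmin y
  have hnum : ‖star x ⬝ᵥ (A *ᵥ y)‖
      = ‖l‖ * ‖star x ⬝ᵥ y‖ := by
    have h1 : star x ⬝ᵥ (A *ᵥ y) = (starRingEnd ℂ l) * (star x ⬝ᵥ y) := by
      rw [Matrix.dotProduct_mulVec]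
      have h2 : star x ᵥ* A = star (A *ᵥ x) := by
        rw [Matrix.star_mulVec, hA.eq]
      rw [h2, hxe]
      have : star (l • x) = starRingEnd ℂ l • star x := by
        ext i; simp [Complex.star_def]
      rw [this, smul_dotProduct]
      rfl
    rw [h1, norm_mul, Complex.norm_conj]
  have hcos : cosAngle x (A *ᵥ y) ≤ cosAngle x y := by
    unfold cosAngle
    rw [hnum, div_le_div_iff₀ (by positivity) (by positivity)]
    set a := ‖star x ⬝ᵥ y‖ with ha
    have ha0 : 0 ≤ a := norm_nonneg _
    nlinarith [mul_le_mul_of_nonneg_left key (mul_nonneg ha0 hxp.le)]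
  have hcosnn : 0 ≤ cosAngle x (A *ᵥ y) := by
    unfold cosAngle; positivity
  unfold sinAngle
  apply Real.sqrt_le_sqrt
  have := pow_le_pow_left₀ hcosnn hcos 2
  linarith
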